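/- (Eigenvector scaling lemma) Let n ≥ 1 and let A be a real n×n matrix that is diagonalizable over ℝ: A = R Λ R⁻¹ with R invertible and Λ diagonal. Let B be a symmetric positive definite real n×n matrix such that A·B is symmetric. Then there exists a symmetric positive definite matrix T with T Λ = Λ T such that, setting R̃ = R T (which is invertible), one has B = R̃ R̃ᵀ and A = R̃ Λ R̃⁻¹; consequently A·B = R̃ Λ R̃ᵀ. -/

import Mathlib

open Matrix

open Polynomial

variable {m : Type*} [Fintype m] [DecidableEq m]

private def conjAlgHom (U V : Matrix m m ℝ) (hUV : U * V = 1) (hVU : V * U = 1) :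
    Matrix m m ℝ →ₐ[ℝ] Matrix m m ℝ where
  toFun X := U * X * V
  map_one' := by show U * 1 * V = 1; rw [Matrix.mul_one, hUV]
  map_mul' X Y := by
    show U * (X * Y) * V = (U * X * V) * (U * Y * V)
    have h : (U * X * V) * (U * Y * V) = U * (X * ((V * U) * (Y * V))) := by
      simp only [Matrix.mul_assoc]
    rw [h, hVU, Matrix.one_mul]
    simp only [Matrix.mul_assoc]
  map_zero' := by show U * 0 * V = 0; simp
  map_add' X Y := by show U * (X + Y) * V = _; rw [Matrix.mul_add, Matrix.add_mul]
  commutes' r := by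
    show U * (algebraMap ℝ (Matrix m m ℝ) r) * V = _
    simp only [Algebra.algebraMap_eq_smul_one, Matrix.mul_smul, Matrix.smul_mul, Matrix.mul_one,
      hUV]

private lemma conj_posDef {C B : Matrix m m ℝ} (hB : B.PosDef) (hC : IsUnit C) :
    (C * B * Cᴴ).PosDef := by
  exact hB.mul_mul_conjTranspose_same (Matrix.vecMul_injective_iff_isUnit.mpr hC)

noncomputable def Matrix.PosSemidef.sqrt {M : Matrix m m ℝ} (hM : M.PosSemidef) : Matrix m m ℝ :=
  (hM.1.eigenvectorUnitary : Matrix m m ℝ) * diagonal ((↑) ∘ Real.sqrt ∘ hM.1.eigenvalues) *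
    (star hM.1.eigenvectorUnitary : Matrix m m ℝ)

lemma Matrix.PosSemidef.posSemidef_sqrt {M : Matrix m m ℝ} (hM : M.PosSemidef) :
    hM.sqrt.PosSemidef := by
  have hd : (diagonal ((↑) ∘ Real.sqrt ∘ hM.1.eigenvalues) : Matrix m m ℝ).PosSemidef :=
    Matrix.PosSemidef.diagonal fun i => Real.sqrt_nonneg _
  have := hd.mul_mul_conjTranspose_same (hM.1.eigenvectorUnitary : Matrix m m ℝ)
  simpa [Matrix.PosSemidef.sqrt, Matrix.star_eq_conjTranspose] using this

lemma Matrix.PosSemidef.sqrt_mul_self {M : Matrix m m ℝ} (hM : M.PosSemidef) :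
    hM.sqrt * hM.sqrt = M := by
  set U : Matrix m m ℝ := (hM.1.eigenvectorUnitary : Matrix m m ℝ) with hUdef
  have hU2 : star U * U = 1 := (Matrix.mem_unitaryGroup_iff').mp (hM.1.eigenvectorUnitary).2
  have hdd : (diagonal ((↑) ∘ Real.sqrt ∘ hM.1.eigenvalues) : Matrix m m ℝ) *
      diagonal ((↑) ∘ Real.sqrt ∘ hM.1.eigenvalues) = diagonal hM.1.eigenvalues := by
    rw [diagonal_mul_diagonal]
    exact congrArg Matrix.diagonal (funext fun i => by
      simp [Real.mul_self_sqrt (hM.eigenvalues_nonneg i)])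
  have hMspec : M = U * diagonal hM.1.eigenvalues * star U := by
    have := hM.1.spectral_theorem
    simpa [RCLike.ofReal_real_eq_id] using this
  calc hM.sqrt * hM.sqrt
      = U * (diagonal ((↑) ∘ Real.sqrt ∘ hM.1.eigenvalues) * (star U * U) *
          diagonal ((↑) ∘ Real.sqrt ∘ hM.1.eigenvalues)) * star U := by
        simp only [Matrix.PosSemidef.sqrt, hUdef, Matrix.mul_assoc]
    _ = M := by rw [hU2, Matrix.mul_one, hdd]; exact hMspec.symm

private lemma posDef_sqrt' {M : Matrix m m ℝ} (hM : M.PosDef) : hM.posSemidef.sqrt.PosDef := by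
  rw [Matrix.PosSemidef.sqrt]
  set U : Matrix m m ℝ := (hM.posSemidef.1.eigenvectorUnitary : Matrix m m ℝ) with hUdef
  have hU1 : U * star U = 1 := (Matrix.mem_unitaryGroup_iff).mp (hM.posSemidef.1.eigenvectorUnitary).2
  have hU : IsUnit U := ⟨⟨U, star U, hU1,
    (Matrix.mem_unitaryGroup_iff').mp (hM.posSemidef.1.eigenvectorUnitary).2⟩, rfl⟩
  have hdiag : (diagonal ((↑) ∘ Real.sqrt ∘ hM.posSemidef.1.eigenvalues) :
      Matrix m m ℝ).PosDef := by
    refine Matrix.PosDef.diagonal fun i => ?_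
    simp only [Function.comp_apply, RCLike.ofReal_real_eq_id, id_eq]
    exact Real.sqrt_pos.mpr (hM.eigenvalues_pos i)
  have := conj_posDef hdiag hU
  simpa [Matrix.star_eq_conjTranspose] using this

private lemma sqrt_commute {M C : Matrix m m ℝ} (hM : M.PosSemidef)
    (h : C * M = M * C) : C * hM.sqrt = hM.sqrt * C := by
  classical
  set ev := hM.1.eigenvalues with hev
  set U : Matrix m m ℝ := (hM.1.eigenvectorUnitary : Matrix m m ℝ) with hUdef
  have hU1 : U * star U = 1 := (Matrix.mem_unitaryGroup_iff).mp (hM.1.eigenvectorUnitary).2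
  have hU2 : star U * U = 1 := (Matrix.mem_unitaryGroup_iff').mp (hM.1.eigenvectorUnitary).2
  set s : Finset ℝ := Finset.image ev Finset.univ with hs
  set p : ℝ[X] := Lagrange.interpolate s id Real.sqrt with hp
  have hpev : ∀ i, p.eval (ev i) = Real.sqrt (ev i) := fun i => by
    exact Lagrange.eval_interpolate_at_node Real.sqrt (Set.injOn_id _)
      (Finset.mem_image_of_mem ev (Finset.mem_univ i))
  have hMspec : M = U * diagonal ev * star U := by
    have := hM.1.spectral_theorem
    simpa [RCLike.ofReal_real_eq_id] using this
  let φ := conjAlgHom U (star U) hU1 hU2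
  have haeval : aeval M p = hM.sqrt := by
    have h1 : aeval M p = φ (aeval (diagonal ev) p) := by
      rw [← Polynomial.aeval_algHom_apply φ (diagonal ev) p]
      have hφ : φ (diagonal ev) = M := by rw [hMspec]; rfl
      rw [hφ]
    have h2 : aeval (diagonal ev) p = diagonal fun i => p.eval (ev i) := by
      have h3 := Polynomial.aeval_algHom_apply (Matrix.diagonalAlgHom (n := m) (α := ℝ) ℝ) ev p
      simp only [Matrix.diagonalAlgHom_apply] at h3
      rw [h3]
      exact congrArg Matrix.diagonal (funext fun i => Polynomial.aeval_fn_apply p ev i)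
    have hd : (diagonal fun i => p.eval (ev i)) =
        diagonal (((↑) : ℝ → ℝ) ∘ Real.sqrt ∘ hM.1.eigenvalues) := by
      exact congrArg Matrix.diagonal (funext fun i => by rw [hpev i]; rfl)
    rw [h1, h2, hd]
    rfl
  have hcomm : Commute C (aeval M p) := by
    rw [Polynomial.aeval_eq_sum_range]
    exact Commute.sum_right _ _ _ fun k _ => Commute.smul_right (Commute.pow_right h k) _
  rw [← haeval]
  exact hcomm

/-- Eigenvector scaling lemma, Barth. -/
theorem eigenvector_scaling
    (n : ℕ) (hn : 1 ≤ n)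
    (A R Λ B : Matrix (Fin n) (Fin n) ℝ)
    (hR : IsUnit R) (hΛ : Λ.IsDiag) (hA : A = R * Λ * R⁻¹)
    (hB : B.PosDef) (hAB : (A * B).IsHermitian) :
    ∃ T : Matrix (Fin n) (Fin n) ℝ,
      T.PosDef ∧ T * Λ = Λ * T ∧ IsUnit (R * T) ∧
      B = (R * T) * (R * T)ᵀ ∧
      A = (R * T) * Λ * (R * T)⁻¹ ∧
      A * B = (R * T) * Λ * (R * T)ᵀ := by
  classical
  have hRdet : IsUnit R.det := (Matrix.isUnit_iff_isUnit_det R).mp hR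
  have hRR : R * R⁻¹ = 1 := Matrix.mul_nonsing_inv R hRdet
  have hR'R : R⁻¹ * R = 1 := Matrix.nonsing_inv_mul R hRdet
  have hRinv : IsUnit R⁻¹ := (Matrix.isUnit_nonsing_inv_iff).mpr hR
  -- symmetry facts
  have hBsym : Bᵀ = B := by
    have := hB.1; rwa [IsHermitian, conjTranspose_eq_transpose_of_trivial] at this
  have hΛsym : Λᵀ = Λ := by
    ext i j
    by_cases hij : i = j
    · subst hij; simp [Matrix.transpose_apply]
    · rw [Matrix.transpose_apply, hΛ (Ne.symm hij), hΛ hij]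
  have hABsym : (A * B)ᵀ = A * B := by
    have := hAB; rwa [IsHermitian, conjTranspose_eq_transpose_of_trivial] at this
  -- M and its properties
  set M : Matrix (Fin n) (Fin n) ℝ := R⁻¹ * B * R⁻¹ᵀ with hMdef
  have hM : M.PosDef := by
    have := conj_posDef hB hRinv
    rwa [conjTranspose_eq_transpose_of_trivial] at this
  -- Λ commutes with M
  have hΛM : Λ * M = M * Λ := by
    have hABform : A * B = R * Λ * (R⁻¹ * B) := by rw [hA]; rw [Matrix.mul_assoc]
    have hABTform : (A * B)ᵀ = B * R⁻¹ᵀ * Λ * Rᵀ := by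
      rw [hABform]
      rw [Matrix.transpose_mul, Matrix.transpose_mul, Matrix.transpose_mul, hBsym, hΛsym]
      simp only [Matrix.mul_assoc]
    have key : R⁻¹ * (A * B) * Rᵀ⁻¹ = Λ * M := by
      rw [hABform, hMdef]
      rw [Matrix.transpose_nonsing_inv]
      calc R⁻¹ * (R * Λ * (R⁻¹ * B)) * Rᵀ⁻¹
          = (R⁻¹ * R) * Λ * (R⁻¹ * B * Rᵀ⁻¹) := by simp only [Matrix.mul_assoc]
        _ = Λ * (R⁻¹ * B * Rᵀ⁻¹) := by rw [hR'R, Matrix.one_mul]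
        _ = _ := by simp only [Matrix.mul_assoc]
    have key2 : R⁻¹ * ((A * B)ᵀ) * Rᵀ⁻¹ = M * Λ := by
      rw [hABTform, hMdef, Matrix.transpose_nonsing_inv]
      have hRt : Rᵀ * Rᵀ⁻¹ = 1 :=
        Matrix.mul_nonsing_inv Rᵀ (by rwa [Matrix.det_transpose])
      calc R⁻¹ * (B * Rᵀ⁻¹ * Λ * Rᵀ) * Rᵀ⁻¹
          = R⁻¹ * B * Rᵀ⁻¹ * Λ * (Rᵀ * Rᵀ⁻¹) := by simp only [Matrix.mul_assoc]
        _ = R⁻¹ * B * Rᵀ⁻¹ * Λ := by rw [hRt, Matrix.mul_one]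
        _ = _ := by simp only [Matrix.mul_assoc]
    rw [← key, ← key2, hABsym]
  -- T
  set T : Matrix (Fin n) (Fin n) ℝ := hM.posSemidef.sqrt with hTdef
  have hTpos : T.PosDef := posDef_sqrt' hM
  have hT2 : T * T = M := hM.posSemidef.sqrt_mul_self
  have hTsym : Tᵀ = T := by
    have := hM.posSemidef.posSemidef_sqrt.1
    rwa [IsHermitian, conjTranspose_eq_transpose_of_trivial] at this
  have hTΛ : T * Λ = Λ * T := (sqrt_commute hM.posSemidef hΛM).symm
  have hTdetU : IsUnit T.det := (Matrix.isUnit_iff_isUnit_det T).mp hTpos.isUnit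
  have hTT : T * T⁻¹ = 1 := Matrix.mul_nonsing_inv T hTdetU
  have hRT : IsUnit (R * T) := hR.mul hTpos.isUnit
  have hRtinv : R⁻¹ᵀ * Rᵀ = 1 := by
    rw [← Matrix.transpose_mul, hRR, Matrix.transpose_one]
  refine ⟨T, hTpos, hTΛ, hRT, ?_, ?_, ?_⟩
  · -- B = (R*T)*(R*T)ᵀ
    rw [Matrix.transpose_mul, hTsym]
    calc B = (R * R⁻¹) * B * (R⁻¹ᵀ * Rᵀ) := by rw [hRR, hRtinv]; simp
      _ = R * M * Rᵀ := by rw [hMdef]; simp only [Matrix.mul_assoc]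
      _ = R * (T * T) * Rᵀ := by rw [hT2]
      _ = R * T * (T * Rᵀ) := by simp only [Matrix.mul_assoc]
  · -- A = (R*T)*Λ*(R*T)⁻¹
    rw [Matrix.mul_inv_rev, hA]
    calc R * Λ * R⁻¹ = R * Λ * (T * T⁻¹) * R⁻¹ := by rw [hTT, Matrix.mul_one]
      _ = R * (Λ * T) * (T⁻¹ * R⁻¹) := by simp only [Matrix.mul_assoc]
      _ = R * (T * Λ) * (T⁻¹ * R⁻¹) := by rw [hTΛ]
      _ = R * T * Λ * (T⁻¹ * R⁻¹) := by simp only [Matrix.mul_assoc]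
  · -- A*B = (R*T)*Λ*(R*T)ᵀ
    rw [Matrix.transpose_mul, hTsym, hA]
    calc R * Λ * R⁻¹ * B
        = R * Λ * (R⁻¹ * B * (R⁻¹ᵀ * Rᵀ)) := by
          rw [hRtinv, Matrix.mul_one]; simp only [Matrix.mul_assoc]
      _ = R * Λ * (M * Rᵀ) := by rw [hMdef]; simp only [Matrix.mul_assoc]
      _ = R * (Λ * (T * T)) * Rᵀ := by rw [hT2]; simp only [Matrix.mul_assoc]
      _ = R * (T * Λ * T) * Rᵀ := by rw [← Matrix.mul_assoc Λ T T, ← hTΛ]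
      _ = R * T * Λ * (T * Rᵀ) := by simp only [Matrix.mul_assoc]
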